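/- arXiv:2411.10797 — 3 statements merged into one kernel-verified Lean document; each statement's English description precedes it below -/
import Mathlib

section
/- Let p ≥ 5 be a prime number. Then there exists a pair (H, G) of groups, both of order 72p, such that H is non-supersolvable, G is supersolvable, and the order sequences of G and H are equal. -/
set_option maxRecDepth 10000

/-- The order sequence of a finite group `G`: the non-decreasing list formed of the
orders of all the elements of `G`. -/
noncomputable def orderSequence (G : Type*) [Group G] [Fintype G] : List ℕ :=
  ((Finset.univ : Finset G).val.map (fun g => orderOf g)).sort (· ≤ ·)

/-- The multiset of element orders of a finite group `G`. -/
noncomputable def orderMultiset (G : Type*) [Group G] [Fintype G] : Multiset ℕ :=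
  (Finset.univ : Finset G).val.map (fun g => orderOf g)

/-- `Dominates a b`: the sequences `a` and `b` have the same length and `a` is
pointwise `≥ b`, i.e. `a i ≥ b i` for every index `i`. -/
def Dominates (a b : List ℕ) : Prop :=
  List.Forall₂ (· ≥ ·) a b

/-- `ProperlyDominates a b`: `a` dominates `b` and `a ≠ b`. -/
def ProperlyDominates (a b : List ℕ) : Prop :=
  Dominates a b ∧ a ≠ b

/-- A group `G` is supersolvable if there is a chain of subgroups
`⊥ = H 0 ≤ H 1 ≤ … ≤ H k = ⊤` with every `H i` normal in `G` and every successive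
quotient `H (i+1) / H i` cyclic. -/
def IsSupersolvable (G : Type*) [Group G] : Prop :=
  ∃ (k : ℕ) (H : Fin (k + 1) → Subgroup G)
    (_ : ∀ i : Fin k, H i.castSucc ≤ H i.succ)
    (hnorm : ∀ i, (H i).Normal),
    H 0 = ⊥ ∧ H (Fin.last k) = ⊤ ∧
    ∀ i : Fin k,
      letI := (hnorm i.castSucc).subgroupOf (H i.succ)
      IsCyclic ((H i.succ) ⧸ (H i.castSucc).subgroupOf (H i.succ))

section Abstract
variable {G : Type*} [Group G] {G' : Type*} [Group G']

lemma quot_cyclic [Finite G] (A B : Subgroup G) (hle : A ≤ B)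
    [hn : (A.subgroupOf B).Normal] (q : ℕ) (hq : q.Prime)
    (hcard : Nat.card B = q * Nat.card A) :
    IsCyclic (↥B ⧸ A.subgroupOf B) := by
  haveI : Fact q.Prime := ⟨hq⟩
  apply isCyclic_of_prime_card (p := q)
  have h1 := Subgroup.card_eq_card_quotient_mul_card_subgroup (A.subgroupOf B)
  have h2 : Nat.card (A.subgroupOf B) = Nat.card A :=
    Nat.card_congr (Subgroup.subgroupOfEquivOfLe hle).toEquiv
  rw [h2, hcard] at h1
  have hA : 0 < Nat.card A := Nat.card_pos
  exact (Nat.eq_of_mul_eq_mul_right hA h1.symm)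

lemma isCyclic_quot_of (f : G →* G') (A B : Subgroup G) (A' B' : Subgroup G')
    [hn : (A.subgroupOf B).Normal] [hn' : (A'.subgroupOf B').Normal]
    (hcyc : IsCyclic (↥B ⧸ A.subgroupOf B))
    (hAf : A.map f ≤ A') (hBf : B.map f ≤ B')
    (hsur : ∀ y ∈ B', ∃ x ∈ B, ∃ a ∈ A', y = f x * a) :
    IsCyclic (↥B' ⧸ A'.subgroupOf B') := by
  have hmem : ∀ x : ↥B, f ↑x ∈ B' := fun x => hBf ⟨x, x.2, rfl⟩
  let j : ↥B →* ↥B' := (f.comp B.subtype).codRestrict B' hmem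
  let ψ : ↥B →* (↥B' ⧸ A'.subgroupOf B') := (QuotientGroup.mk' (A'.subgroupOf B')).comp j
  have hker : A.subgroupOf B ≤ ψ.ker := by
    intro x hx
    have hx' : (x : G) ∈ A := hx
    rw [MonoidHom.mem_ker]
    show ((j x : ↥B') : ↥B' ⧸ A'.subgroupOf B') = 1
    rw [QuotientGroup.eq_one_iff]
    show ((j x : ↥B') : G') ∈ A'
    exact hAf ⟨x, hx', rfl⟩
  let Φ := QuotientGroup.lift (A.subgroupOf B) ψ hker
  apply isCyclic_of_surjective Φ
  intro qy
  induction qy using QuotientGroup.induction_on with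
  | H y =>
    obtain ⟨x, hxB, a, haA', hy⟩ := hsur (y : G') y.2
    refine ⟨QuotientGroup.mk (⟨x, hxB⟩ : ↥B), ?_⟩
    show ψ ⟨x, hxB⟩ = ↑y
    show ((j ⟨x, hxB⟩ : ↥B') : ↥B' ⧸ A'.subgroupOf B') = ↑y
    rw [QuotientGroup.eq, Subgroup.mem_subgroupOf]
    have hc : ((j ⟨x, hxB⟩ : ↥B') : G') = f x := rfl
    simp only [MulMemClass.coe_mul, InvMemClass.coe_inv, hc, hy]
    simpa using haA'

lemma IsSupersolvable.of_surjective (f : G →* G') (hf : Function.Surjective f)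
    (h : IsSupersolvable G) : IsSupersolvable G' := by
  obtain ⟨k, H, hmono, hnorm, h0, hlast, hcyc⟩ := h
  refine ⟨k, fun i => (H i).map f, fun i => Subgroup.map_mono (hmono i),
    fun i => (hnorm i).map f hf, by simp only [h0, Subgroup.map_bot],
    by simp only [hlast]; exact Subgroup.map_top_of_surjective f hf, fun i => ?_⟩
  haveI := (hnorm i.castSucc).subgroupOf (H i.succ)
  haveI := ((hnorm i.castSucc).map f hf).subgroupOf ((H i.succ).map f)
  refine isCyclic_quot_of f (H i.castSucc) (H i.succ) _ _ (hcyc i) le_rfl le_rfl ?_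
  rintro y ⟨x, hx, rfl⟩
  exact ⟨x, hx, 1, one_mem _, by simp⟩

lemma prod_top_normal {B : Type*} [Group B] (A : Subgroup G) (hA : A.Normal) :
    (A.prod (⊤ : Subgroup B)).Normal := by
  constructor
  rintro ⟨n1, n2⟩ hn ⟨g1, g2⟩
  rw [Subgroup.mem_prod] at hn ⊢
  exact ⟨hA.conj_mem n1 hn.1 g1, trivial⟩

lemma isCyclic_bot_prod_top {B : Type*} [Group B] (hB : IsCyclic B) :
    IsCyclic ↥((⊥ : Subgroup G).prod (⊤ : Subgroup B)) := by
  have hmem : ∀ b : B, ((1 : G), b) ∈ (⊥ : Subgroup G).prod ⊤ := by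
    intro b; rw [Subgroup.mem_prod]; exact ⟨rfl, trivial⟩
  let φ : B →* ↥((⊥ : Subgroup G).prod (⊤ : Subgroup B)) :=
    (MonoidHom.inr G B).codRestrict _ hmem
  apply isCyclic_of_surjective φ
  rintro ⟨⟨a, b⟩, hab⟩
  rw [Subgroup.mem_prod] at hab
  have : a = 1 := hab.1
  exact ⟨b, Subtype.ext (by simp [φ, this]; rfl)⟩

lemma isCyclic_quot_of_isCyclic (B : Subgroup G) (N : Subgroup ↥B) [N.Normal]
    (h : IsCyclic ↥B) : IsCyclic (↥B ⧸ N) := by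
  haveI := h
  exact isCyclic_of_surjective (QuotientGroup.mk' N) (QuotientGroup.mk'_surjective _)

end Abstract

section Abstract2
variable {G : Type*} [Group G]

lemma isCyclic_quot_congr {A B A2 B2 : Subgroup G} (hA : A2 = A) (hB : B2 = B)
    [h1 : (A.subgroupOf B).Normal] (h : IsCyclic (↥B ⧸ A.subgroupOf B))
    (h2 : (A2.subgroupOf B2).Normal) :
    letI := h2
    IsCyclic (↥B2 ⧸ A2.subgroupOf B2) := by
  subst hA hB; exact h

lemma isCyclic_of_quot_bot {A B : Subgroup G} (hA : A = ⊥) [h : (A.subgroupOf B).Normal]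
    (hc : IsCyclic (↥B ⧸ A.subgroupOf B)) : IsCyclic ↥B := by
  have hker : A.subgroupOf B ≤ (MonoidHom.id ↥B).ker := by
    intro x hx
    have hxA : (x : G) ∈ A := hx
    rw [hA, Subgroup.mem_bot] at hxA
    rw [MonoidHom.mem_ker]
    exact Subtype.ext hxA
  haveI := hc
  exact isCyclic_of_surjective (QuotientGroup.lift _ (MonoidHom.id ↥B) hker)
    (fun b => ⟨QuotientGroup.mk b, rfl⟩)

lemma IsSupersolvable.prod_cyclic {B : Type*} [Group B] (hA : IsSupersolvable G)
    (hB : IsCyclic B) : IsSupersolvable (G × B) := by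
  obtain ⟨k, H, hmono, hnorm, h0, hlast, hcyc⟩ := hA
  refine ⟨k + 1, fun i => Fin.cases ⊥ (fun j => (H j).prod ⊤) i, ?_, ?_, ?_, ?_, ?_⟩
  · intro i
    refine Fin.cases ?_ ?_ i
    · simp only [Fin.castSucc_zero, Fin.cases_zero]
      exact bot_le
    · intro j
      rw [← Fin.succ_castSucc]
      simp only [Fin.cases_succ]
      exact Subgroup.prod_mono (hmono j) le_rfl
  · intro i
    refine Fin.cases ?_ ?_ i
    · simp only [Fin.cases_zero]
      infer_instance
    · intro j
      simp only [Fin.cases_succ]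
      exact prod_top_normal _ (hnorm j)
  · simp only [Fin.cases_zero]
  · rw [← Fin.succ_last]
    simp only [Fin.cases_succ, hlast]
    exact Subgroup.top_prod_top
  · intro i
    refine Fin.cases ?_ ?_ i
    · haveI : (((⊥ : Subgroup (G × B)).subgroupOf
          ((⊥ : Subgroup G).prod (⊤ : Subgroup B)))).Normal :=
        Subgroup.Normal.subgroupOf inferInstance _
      refine isCyclic_quot_congr (A := ⊥) (B := (⊥ : Subgroup G).prod ⊤) rfl ?_ ?_ ?_
      · show (H 0).prod ⊤ = (⊥ : Subgroup G).prod ⊤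
        rw [h0]
      · exact isCyclic_quot_of_isCyclic _ _ (isCyclic_bot_prod_top hB)
    · intro j
      haveI h1 : ((H j.castSucc).subgroupOf (H j.succ)).Normal :=
        Subgroup.Normal.subgroupOf (hnorm j.castSucc) _
      haveI h2 : (((H j.castSucc).prod (⊤ : Subgroup B)).subgroupOf
          ((H j.succ).prod (⊤ : Subgroup B))).Normal :=
        Subgroup.Normal.subgroupOf (prod_top_normal _ (hnorm j.castSucc)) _
      refine isCyclic_quot_congr (A := (H j.castSucc).prod ⊤) (B := (H j.succ).prod ⊤)
        rfl rfl ?_ h2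
      · refine isCyclic_quot_of (MonoidHom.inl G B) (H j.castSucc) (H j.succ) _ _
          (hcyc j) ?_ ?_ ?_
        · rintro y ⟨x, hx, rfl⟩
          rw [Subgroup.mem_prod]
          exact ⟨hx, trivial⟩
        · rintro y ⟨x, hx, rfl⟩
          rw [Subgroup.mem_prod]
          exact ⟨hx, trivial⟩
        · intro y hy
          rw [Subgroup.mem_prod] at hy
          refine ⟨y.1, hy.1, (1, y.2), ?_, ?_⟩
          · rw [Subgroup.mem_prod]; exact ⟨one_mem _, trivial⟩
          · ext <;> simp [MonoidHom.inl]

lemma exists_norm_elt [Finite G] (h : IsSupersolvable G) (y : G) (hy : y ≠ 1) :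
    ∃ x : G, x ≠ 1 ∧ ∀ g : G, g * x * g⁻¹ ∈ Subgroup.zpowers x := by
  classical
  obtain ⟨k, H, hmono, hnorm, h0, hlast, hcyc⟩ := h
  have hPk : ∃ n, ∃ hlt : n < k + 1, H ⟨n, hlt⟩ ≠ ⊥ := by
    refine ⟨k, Nat.lt_succ_self k, ?_⟩
    have hl : (⟨k, Nat.lt_succ_self k⟩ : Fin (k+1)) = Fin.last k := rfl
    rw [hl, hlast]
    intro htop
    exact hy (Subgroup.mem_bot.mp (htop ▸ Subgroup.mem_top y))
  let m := Nat.find hPk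
  obtain ⟨hmlt, hmne⟩ := Nat.find_spec hPk
  have hm0 : m ≠ 0 := by
    intro e
    apply (show ∃ hlt : m < k + 1, H ⟨m, hlt⟩ ≠ ⊥ from Nat.find_spec hPk).elim
    intro hlt hne
    apply hne
    have : (⟨m, hlt⟩ : Fin (k+1)) = 0 := by simp [e, Fin.ext_iff]
    rw [this, h0]
  obtain ⟨m', hm'⟩ := Nat.exists_eq_succ_of_ne_zero hm0
  have hm'k : m' < k := by omega
  set i : Fin k := ⟨m', hm'k⟩ with hi
  have hbot : H i.castSucc = ⊥ := by
    by_contra hne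
    have : m ≤ m' := Nat.find_min' hPk ⟨by omega, hne⟩
    omega
  have hne : H i.succ ≠ ⊥ := by
    have : i.succ = ⟨m, hmlt⟩ := by simp [hi, Fin.ext_iff, hm']
    rw [this]
    exact hmne
  have hc := hcyc i
  haveI := (hnorm i.castSucc).subgroupOf (H i.succ)
  have hcycB : IsCyclic ↥(H i.succ) := isCyclic_of_quot_bot hbot hc
  obtain ⟨b, hb⟩ := hcycB.exists_generator
  refine ⟨(b : G), ?_, ?_⟩
  · intro hb1
    apply hne
    rw [Subgroup.eq_bot_iff_forall]
    intro z hz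
    obtain ⟨n, hn⟩ := Subgroup.mem_zpowers_iff.mp (hb ⟨z, hz⟩)
    have : ((b ^ n : ↥(H i.succ)) : G) = z := congrArg _ hn
    rw [← this]
    push_cast [hb1]
    exact one_zpow n
  · intro g
    have hmem : g * (b : G) * g⁻¹ ∈ H i.succ := (hnorm i.succ).conj_mem (b : G) b.2 g
    obtain ⟨n, hn⟩ := Subgroup.mem_zpowers_iff.mp (hb ⟨_, hmem⟩)
    refine Subgroup.mem_zpowers_iff.mpr ⟨n, ?_⟩
    have : ((b ^ n : ↥(H i.succ)) : G) = g * (b : G) * g⁻¹ := congrArg _ hn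
    rw [← this]
    push_cast
    rfl

lemma orderOf_eq_of_pow_iff {G' H' : Type*} [Group G'] [Group H'] [Fintype G'] [Fintype H']
    (x : G') (y : H') (hG : Fintype.card G' = 72) (hH : Fintype.card H' = 72)
    (h : ∀ n < 73, n ∣ 72 → (x ^ n = 1 ↔ y ^ n = 1)) : orderOf x = orderOf y := by
  have hx : orderOf x ∣ 72 := hG ▸ orderOf_dvd_card
  have hy : orderOf y ∣ 72 := hH ▸ orderOf_dvd_card
  have hxlt : orderOf x < 73 := Nat.lt_succ_of_le (Nat.le_of_dvd (by norm_num) hx)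
  have hylt : orderOf y < 73 := Nat.lt_succ_of_le (Nat.le_of_dvd (by norm_num) hy)
  have h1 : y ^ orderOf x = 1 := (h _ hxlt hx).mp (pow_orderOf_eq_one x)
  have h2 : x ^ orderOf y = 1 := (h _ hylt hy).mpr (pow_orderOf_eq_one y)
  exact Nat.dvd_antisymm (orderOf_dvd_of_pow_eq_one h2) (orderOf_dvd_of_pow_eq_one h1)

lemma orderMultiset_eq_of {G' H' : Type*} [Group G'] [Group H'] [Fintype G'] [Fintype H']
    (f : G' → H') (hinj : Function.Injective f)
    (hcard : Fintype.card G' = Fintype.card H')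
    (h : ∀ g, orderOf (f g) = orderOf g) : orderMultiset H' = orderMultiset G' := by
  have huniv : (Finset.univ.map ⟨f, hinj⟩ : Finset H') = Finset.univ := by
    apply Finset.eq_univ_of_card
    rw [Finset.card_map, Finset.card_univ, hcard]
  unfold orderMultiset
  conv_lhs => rw [← huniv]
  rw [Finset.map_val, Multiset.map_map]
  exact Multiset.map_congr rfl (fun x _ => h x)

lemma orderSequence_congr {G' H' : Type*} [Group G'] [Group H'] [Fintype G'] [Fintype H']
    (h : orderMultiset G' = orderMultiset H') : orderSequence G' = orderSequence H' := by
  unfold orderSequence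
  unfold orderMultiset at h
  rw [h]

end Abstract2

abbrev V3 := ZMod 3 × ZMod 3

def act1 : DihedralGroup 4 → V3 → V3
  | DihedralGroup.r i, v =>
    if i = 0 then v else if i = 1 then (v.2, 2*v.1) else
    if i = 2 then (2*v.1, 2*v.2) else (2*v.2, v.1)
  | DihedralGroup.sr i, v =>
    if i = 0 then (v.2, v.1) else if i = 1 then (2*v.1, v.2) else
    if i = 2 then (2*v.2, 2*v.1) else (v.1, 2*v.2)

def act2 : DihedralGroup 4 → V3 → V3
  | DihedralGroup.r i, v => if i = 0 ∨ i = 2 then v else (2*v.1, 2*v.2)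
  | DihedralGroup.sr i, v => if i = 0 ∨ i = 2 then v else (2*v.1, 2*v.2)

lemma act1_mul : ∀ d e : DihedralGroup 4, ∀ v : V3, act1 (d*e) v = act1 d (act1 e v) := by decide
lemma act1_add : ∀ d : DihedralGroup 4, ∀ v w : V3, act1 d (v+w) = act1 d v + act1 d w := by decide
lemma act1_one : ∀ v : V3, act1 1 v = v := by decide
lemma act1_zero : ∀ d : DihedralGroup 4, act1 d 0 = 0 := by decide
lemma act2_mul : ∀ d e : DihedralGroup 4, ∀ v : V3, act2 (d*e) v = act2 d (act2 e v) := by decide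
lemma act2_add : ∀ d : DihedralGroup 4, ∀ v w : V3, act2 d (v+w) = act2 d v + act2 d w := by decide
lemma act2_one : ∀ v : V3, act2 1 v = v := by decide
lemma act2_zero : ∀ d : DihedralGroup 4, act2 d 0 = 0 := by decide

def K1 : Type := V3 × DihedralGroup 4
def K2 : Type := V3 × DihedralGroup 4

instance : DecidableEq K1 := inferInstanceAs (DecidableEq (V3 × DihedralGroup 4))
instance : Fintype K1 := inferInstanceAs (Fintype (V3 × DihedralGroup 4))
instance : DecidableEq K2 := inferInstanceAs (DecidableEq (V3 × DihedralGroup 4))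
instance : Fintype K2 := inferInstanceAs (Fintype (V3 × DihedralGroup 4))

def gmul1 (x y : V3 × DihedralGroup 4) : V3 × DihedralGroup 4 :=
  (x.1 + act1 x.2 y.1, x.2 * y.2)
def ginv1 (x : V3 × DihedralGroup 4) : V3 × DihedralGroup 4 :=
  (act1 x.2⁻¹ (-x.1), x.2⁻¹)
def gmul2 (x y : V3 × DihedralGroup 4) : V3 × DihedralGroup 4 :=
  (x.1 + act2 x.2 y.1, x.2 * y.2)
def ginv2 (x : V3 × DihedralGroup 4) : V3 × DihedralGroup 4 :=
  (act2 x.2⁻¹ (-x.1), x.2⁻¹)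

instance instGroupK1 : Group K1 where
  mul := gmul1
  one := ((0 : V3), (1 : DihedralGroup 4))
  inv := ginv1
  mul_assoc a b c := by
    show gmul1 (gmul1 a b) c = gmul1 a (gmul1 b c)
    simp only [gmul1, act1_mul, act1_add, Prod.mk.injEq, mul_assoc, add_assoc, and_self]
  one_mul a := by
    show gmul1 ((0 : V3), (1 : DihedralGroup 4)) a = a
    simp only [gmul1, act1_one, zero_add, one_mul]
    rfl
  mul_one a := by
    show gmul1 a ((0 : V3), (1 : DihedralGroup 4)) = a
    simp only [gmul1, act1_zero, add_zero, mul_one]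
    rfl
  inv_mul_cancel a := by
    show gmul1 (ginv1 a) a = ((0 : V3), (1 : DihedralGroup 4))
    simp only [gmul1, ginv1, ← act1_add, neg_add_cancel, act1_zero, inv_mul_cancel]

instance instGroupK2 : Group K2 where
  mul := gmul2
  one := ((0 : V3), (1 : DihedralGroup 4))
  inv := ginv2
  mul_assoc a b c := by
    show gmul2 (gmul2 a b) c = gmul2 a (gmul2 b c)
    simp only [gmul2, act2_mul, act2_add, Prod.mk.injEq, mul_assoc, add_assoc, and_self]
  one_mul a := by
    show gmul2 ((0 : V3), (1 : DihedralGroup 4)) a = a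
    simp only [gmul2, act2_one, zero_add, one_mul]
    rfl
  mul_one a := by
    show gmul2 a ((0 : V3), (1 : DihedralGroup 4)) = a
    simp only [gmul2, act2_zero, add_zero, mul_one]
    rfl
  inv_mul_cancel a := by
    show gmul2 (ginv2 a) a = ((0 : V3), (1 : DihedralGroup 4))
    simp only [gmul2, ginv2, ← act2_add, neg_add_cancel, act2_zero, inv_mul_cancel]

lemma cardK1 : Fintype.card K1 = 72 := by decide
lemma cardK2 : Fintype.card K2 = 72 := by decide

open DihedralGroup in
def eRaw : V3 × DihedralGroup 4 → V3 × DihedralGroup 4 := fun x =>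
  if x = ((0,1), r 2) then ((0,1), sr 1) else
  if x = ((0,1), sr 1) then ((0,1), r 2) else
  if x = ((0,2), r 2) then ((0,2), sr 1) else
  if x = ((0,2), sr 1) then ((0,2), r 2) else
  if x = ((1,0), r 2) then ((1,0), sr 3) else
  if x = ((1,0), sr 3) then ((1,0), r 2) else
  if x = ((1,1), r 2) then ((1,1), sr 1) else
  if x = ((1,1), sr 1) then ((1,1), r 2) else
  if x = ((1,1), sr 2) then ((1,1), sr 3) else
  if x = ((1,1), sr 3) then ((1,1), sr 2) else
  if x = ((1,2), r 2) then ((1,2), sr 1) else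
  if x = ((1,2), sr 0) then ((1,2), sr 3) else
  if x = ((1,2), sr 1) then ((1,2), r 2) else
  if x = ((1,2), sr 3) then ((1,2), sr 0) else
  if x = ((2,0), r 2) then ((2,0), sr 3) else
  if x = ((2,0), sr 3) then ((2,0), r 2) else
  if x = ((2,1), r 2) then ((2,1), sr 1) else
  if x = ((2,1), sr 0) then ((2,1), sr 3) else
  if x = ((2,1), sr 1) then ((2,1), r 2) else
  if x = ((2,1), sr 3) then ((2,1), sr 0) else
  if x = ((2,2), r 2) then ((2,2), sr 1) else
  if x = ((2,2), sr 1) then ((2,2), r 2) else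
  if x = ((2,2), sr 2) then ((2,2), sr 3) else
  if x = ((2,2), sr 3) then ((2,2), sr 2) else
  x

def eFun : K1 → K2 := eRaw

lemma e_inj : Function.Injective eFun := by decide

lemma e_pow_iff : ∀ x : K1, ∀ n < 73, n ∣ 72 → ((eFun x) ^ n = 1 ↔ x ^ n = 1) := by decide

lemma K1_pow12 : ∀ x : K1, x ^ 12 = 1 := by decide

lemma K1_not_normal : ∀ x : K1, x ≠ 1 → ∃ g : K1, ∀ n < 12, g * x * g⁻¹ ≠ x ^ n := by decide

def isRot : DihedralGroup 4 → Prop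
  | DihedralGroup.r _ => True
  | DihedralGroup.sr _ => False

instance : DecidablePred isRot := fun d => by cases d <;> simp [isRot] <;> infer_instance

def P1 (x : K2) : Prop := x.1.2 = 0 ∧ x.2 = 1
def P2 (x : K2) : Prop := x.2 = 1
def P3 (x : K2) : Prop := x.2 = 1 ∨ x.2 = DihedralGroup.r 2
def P4 (x : K2) : Prop := isRot x.2

instance : DecidablePred P1 := fun x => inferInstanceAs (Decidable (_ ∧ _))
instance : DecidablePred P2 := fun x => inferInstanceAs (Decidable (_ = _))
instance : DecidablePred P3 := fun x => inferInstanceAs (Decidable (_ ∨ _))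
instance : DecidablePred P4 := fun x => inferInstanceAs (Decidable (isRot x.2))

def C1 : Subgroup K2 where
  carrier := {x | P1 x}
  mul_mem' := fun {a b} ha hb => (by decide : ∀ a b : K2, P1 a → P1 b → P1 (a*b)) a b ha hb
  one_mem' := by decide
  inv_mem' := fun {a} ha => (by decide : ∀ a : K2, P1 a → P1 a⁻¹) a ha

def C2 : Subgroup K2 where
  carrier := {x | P2 x}
  mul_mem' := fun {a b} ha hb => (by decide : ∀ a b : K2, P2 a → P2 b → P2 (a*b)) a b ha hb
  one_mem' := by decide
  inv_mem' := fun {a} ha => (by decide : ∀ a : K2, P2 a → P2 a⁻¹) a ha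

def C3 : Subgroup K2 where
  carrier := {x | P3 x}
  mul_mem' := fun {a b} ha hb => (by decide : ∀ a b : K2, P3 a → P3 b → P3 (a*b)) a b ha hb
  one_mem' := by decide
  inv_mem' := fun {a} ha => (by decide : ∀ a : K2, P3 a → P3 a⁻¹) a ha

def C4 : Subgroup K2 where
  carrier := {x | P4 x}
  mul_mem' := fun {a b} ha hb => (by decide : ∀ a b : K2, P4 a → P4 b → P4 (a*b)) a b ha hb
  one_mem' := by decide
  inv_mem' := fun {a} ha => (by decide : ∀ a : K2, P4 a → P4 a⁻¹) a ha

instance : DecidablePred (· ∈ C1) := fun x => inferInstanceAs (Decidable (P1 x))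
instance : DecidablePred (· ∈ C2) := fun x => inferInstanceAs (Decidable (P2 x))
instance : DecidablePred (· ∈ C3) := fun x => inferInstanceAs (Decidable (P3 x))
instance : DecidablePred (· ∈ C4) := fun x => inferInstanceAs (Decidable (P4 x))

lemma C1_normal : C1.Normal :=
  ⟨fun n hn g => (by decide : ∀ n : K2, P1 n → ∀ g : K2, P1 (g*n*g⁻¹)) n hn g⟩
lemma C2_normal : C2.Normal :=
  ⟨fun n hn g => (by decide : ∀ n : K2, P2 n → ∀ g : K2, P2 (g*n*g⁻¹)) n hn g⟩
lemma C3_normal : C3.Normal :=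
  ⟨fun n hn g => (by decide : ∀ n : K2, P3 n → ∀ g : K2, P3 (g*n*g⁻¹)) n hn g⟩
lemma C4_normal : C4.Normal :=
  ⟨fun n hn g => (by decide : ∀ n : K2, P4 n → ∀ g : K2, P4 (g*n*g⁻¹)) n hn g⟩

lemma cardC1 : Nat.card C1 = 3 := by rw [Nat.card_eq_fintype_card]; decide
lemma cardC2 : Nat.card C2 = 9 := by rw [Nat.card_eq_fintype_card]; decide
lemma cardC3 : Nat.card C3 = 18 := by rw [Nat.card_eq_fintype_card]; decide
lemma cardC4 : Nat.card C4 = 36 := by rw [Nat.card_eq_fintype_card]; decide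
lemma cardK2' : Nat.card K2 = 72 := by rw [Nat.card_eq_fintype_card]; exact cardK2

lemma C1le2 : C1 ≤ C2 := fun x hx => hx.2
lemma C2le3 : C2 ≤ C3 := fun x hx => Or.inl hx
lemma C3le4 : C3 ≤ C4 := fun x hx => by
  show isRot x.2
  rcases hx with h | h <;> rw [h] <;> decide

def chainK2 : Fin 6 → Subgroup K2 := ![⊥, C1, C2, C3, C4, ⊤]

lemma K2_ss : IsSupersolvable K2 := by
  refine ⟨5, chainK2, ?_, ?_, rfl, rfl, ?_⟩
  · intro i
    fin_cases i
    · exact bot_le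
    · exact C1le2
    · exact C2le3
    · exact C3le4
    · exact le_top
  · intro i
    fin_cases i
    · exact (inferInstance : (⊥ : Subgroup K2).Normal)
    · exact C1_normal
    · exact C2_normal
    · exact C3_normal
    · exact C4_normal
    · exact (inferInstance : (⊤ : Subgroup K2).Normal)
  · intro i
    fin_cases i
    · haveI : ((⊥ : Subgroup K2).subgroupOf C1).Normal :=
        Subgroup.Normal.subgroupOf inferInstance _
      exact quot_cyclic ⊥ C1 bot_le 3 (by norm_num)
        (by rw [cardC1, Subgroup.card_bot])
    · haveI : (C1.subgroupOf C2).Normal := Subgroup.Normal.subgroupOf C1_normal _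
      exact quot_cyclic C1 C2 C1le2 3 (by norm_num) (by rw [cardC2, cardC1])
    · haveI : (C2.subgroupOf C3).Normal := Subgroup.Normal.subgroupOf C2_normal _
      exact quot_cyclic C2 C3 C2le3 2 (by norm_num) (by rw [cardC3, cardC2])
    · haveI : (C3.subgroupOf C4).Normal := Subgroup.Normal.subgroupOf C3_normal _
      exact quot_cyclic C3 C4 C3le4 2 (by norm_num) (by rw [cardC4, cardC3])
    · haveI : (C4.subgroupOf (⊤ : Subgroup K2)).Normal :=
        Subgroup.Normal.subgroupOf C4_normal _
      exact quot_cyclic C4 ⊤ le_top 2 (by norm_num)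
        (by rw [Subgroup.card_top, cardK2', cardC4])

lemma K1_not_ss : ¬ IsSupersolvable K1 := by
  intro h
  obtain ⟨x, hx1, hconj⟩ := exists_norm_elt h ((((1 : ZMod 3), (0 : ZMod 3)),
    (1 : DihedralGroup 4)) : K1)
    (show ((((1 : ZMod 3), (0 : ZMod 3)), (1 : DihedralGroup 4)) : K1) ≠ (1 : K1) by decide)
  obtain ⟨g, hg⟩ := K1_not_normal x hx1
  have hmem := hconj g
  rw [← mem_powers_iff_mem_zpowers] at hmem
  obtain ⟨n, hn⟩ := (Submonoid.mem_powers_iff _ _).mp hmem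
  have hord : orderOf x ∣ 12 := orderOf_dvd_of_pow_eq_one (K1_pow12 x)
  have hlt : n % orderOf x < 12 :=
    lt_of_lt_of_le (Nat.mod_lt _ (orderOf_pos x)) (Nat.le_of_dvd (by norm_num) hord)
  exact hg _ hlt (by rw [pow_mod_orderOf, hn])

lemma e_ord : ∀ x : K1, orderOf (eFun x) = orderOf x := fun x =>
  orderOf_eq_of_pow_iff (eFun x) x cardK2 cardK1 (e_pow_iff x)

/-- For every prime `p ≥ 5` there are groups `H` and `G` of order `72p` such that `H`
is non-supersolvable, `G` is supersolvable and they have equal order sequences. -/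
theorem exists_equal_orderSequence_72p {p : ℕ} (hp : p.Prime) (hp5 : 5 ≤ p) :
    ∃ (H : Type) (gH : Group H) (fH : Fintype H) (G : Type) (gG : Group G)
      (fG : Fintype G),
      letI := gH; letI := fH; letI := gG; letI := fG;
      Fintype.card H = 72 * p ∧ Fintype.card G = 72 * p ∧
      ¬ IsSupersolvable H ∧ IsSupersolvable G ∧
      orderSequence G = orderSequence H := by
  haveI : NeZero p := ⟨hp.pos.ne'⟩
  refine ⟨K1 × Multiplicative (ZMod p), inferInstance, inferInstance,
    K2 × Multiplicative (ZMod p), inferInstance, inferInstance, ?_, ?_, ?_, ?_, ?_⟩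
  · rw [Fintype.card_prod, cardK1, Fintype.card_multiplicative, ZMod.card]
  · rw [Fintype.card_prod, cardK2, Fintype.card_multiplicative, ZMod.card]
  · intro h
    exact K1_not_ss (h.of_surjective (MonoidHom.fst _ _) Prod.fst_surjective)
  · exact K2_ss.prod_cyclic inferInstance
  · refine orderSequence_congr (orderMultiset_eq_of (Prod.map eFun id)
      (e_inj.prodMap Function.injective_id) ?_ ?_)
    · rw [Fintype.card_prod, Fintype.card_prod, cardK1, cardK2]
    · intro g
      rw [Prod.orderOf, Prod.orderOf]
      show ((orderOf (eFun g.1)).lcm (orderOf g.2)) = _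
      rw [e_ord g.1]
end

section
/- Let p ≥ 11 be an odd prime with p ≡ 2 (mod 3). Then the order sequence of C_p × A_4 properly dominates the order sequence of S_3 × D_{2p}, where S_3 is the symmetric group on 3 letters and D_{2p} is the dihedral group of order 2p (note both groups have order 12p). -/
-- auxiliary lemmas


lemma OS.univ_val_map_equiv {α β : Type*} [Fintype α] [Fintype β] (e : β ≃ α) (f : α → ℕ) :
    (Finset.univ : Finset α).val.map f = (Finset.univ : Finset β).val.map (f ∘ e) := by
  conv_lhs => rw [← Finset.map_univ_equiv e]
  rw [Finset.map_val, Multiset.map_map]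
  rfl

lemma OS.map_ite_point {α : Type*} [Fintype α] [DecidableEq α] (a : α) (x y : ℕ) :
    (Finset.univ : Finset α).val.map (fun g => if g = a then x else y)
      = x ::ₘ Multiset.replicate (Fintype.card α - 1) y := by
  have h : (Finset.univ : Finset α).val = a ::ₘ ((Finset.univ : Finset α).val.erase a) :=
    (Multiset.cons_erase (Finset.mem_univ a)).symm
  rw [h, Multiset.map_cons, if_pos rfl]
  congr 1
  have hn : ((Finset.univ : Finset α).val.erase a).map (fun g => if g = a then x else y)
      = ((Finset.univ : Finset α).val.erase a).map (fun _ => y) := by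
    apply Multiset.map_congr rfl
    intro g hg
    have := (Multiset.Nodup.mem_erase_iff (Finset.univ.nodup)).mp hg
    simp [this.1]
  rw [hn, Multiset.map_const', Multiset.card_erase_of_mem (Finset.mem_univ a)]
  rfl

lemma OS.orderMultiset_prod (G H : Type*) [Group G] [Group H] [Fintype G] [Fintype H] :
    orderMultiset (G × H)
      = (orderMultiset G).bind (fun m => (orderMultiset H).map (Nat.lcm m)) := by
  unfold orderMultiset
  rw [← Finset.univ_product_univ, Finset.product_val]
  show ((Finset.univ : Finset G).val.bind
      (fun a => ((Finset.univ : Finset H).val.map (Prod.mk a)))).map (fun g => orderOf g) = _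
  rw [Multiset.map_bind, Multiset.bind_map]
  apply Multiset.bind_congr
  intro a _
  rw [Multiset.map_map, Multiset.map_map]
  apply Multiset.map_congr rfl
  intro b _
  simp [Prod.orderOf]

lemma OS.bind_replicate {α β : Type*} (n : ℕ) (a : α) (f : α → Multiset β) :
    (Multiset.replicate n a).bind f = n • f a := by
  induction n with
  | zero => simp
  | succ k ih => rw [Multiset.replicate_succ, Multiset.cons_bind, ih, succ_nsmul, add_comm]

lemma OS.ord23 {G : Type*} [Group G] [DecidableEq G] (g : G) (h : g^2 = 1 ∨ g^3 = 1) :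
    orderOf g = if g = 1 then 1 else if g ^ 2 = 1 then 2 else 3 := by
  split_ifs with h1 h2
  · simp [h1]
  · exact orderOf_eq_prime h2 h1
  · rcases h with h | h
    · exact absurd h h2
    · exact orderOf_eq_prime h h1

lemma OS.orderMultiset_A4 :
    orderMultiset (alternatingGroup (Fin 4))
      = ({1} : Multiset ℕ) + Multiset.replicate 3 2 + Multiset.replicate 8 3 := by
  unfold orderMultiset
  have h : ∀ g : alternatingGroup (Fin 4), g^2 = 1 ∨ g^3 = 1 := by decide
  rw [Multiset.map_congr rfl (fun g _ => OS.ord23 g (h g))]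
  decide

lemma OS.orderMultiset_S3 :
    orderMultiset (Equiv.Perm (Fin 3))
      = ({1} : Multiset ℕ) + Multiset.replicate 3 2 + Multiset.replicate 2 3 := by
  unfold orderMultiset
  have h : ∀ g : Equiv.Perm (Fin 3), g^2 = 1 ∨ g^3 = 1 := by decide
  rw [Multiset.map_congr rfl (fun g _ => OS.ord23 g (h g))]
  decide

def OS.dihEquiv (n : ℕ) : (ZMod n) ⊕ (ZMod n) ≃ DihedralGroup n where
  toFun := fun i => match i with
    | Sum.inl i => DihedralGroup.r i
    | Sum.inr i => DihedralGroup.sr i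
  invFun := fun g => match g with
    | DihedralGroup.r i => Sum.inl i
    | DihedralGroup.sr i => Sum.inr i
  left_inv := by rintro (i | i) <;> rfl
  right_inv := by rintro (i | i) <;> rfl

section
variable {p : ℕ} [Fact p.Prime]

lemma OS.orderMultiset_Cp :
    orderMultiset (Multiplicative (ZMod p)) = 1 ::ₘ Multiset.replicate (p - 1) p := by
  have hord : ∀ g : Multiplicative (ZMod p), orderOf g = if g = 1 then 1 else p := by
    intro g
    split_ifs with h
    · simp [h]
    · have hd : orderOf g ∣ p := by
        have := orderOf_dvd_card (x := g)
        rwa [Fintype.card_multiplicative, ZMod.card] at this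
      rcases (Nat.Prime.eq_one_or_self_of_dvd Fact.out _ hd) with h1 | h1
      · exact absurd (orderOf_eq_one_iff.mp h1) h
      · exact h1
  unfold orderMultiset
  rw [Multiset.map_congr rfl (fun g _ => hord g), OS.map_ite_point]
  congr 2
  rw [Fintype.card_multiplicative, ZMod.card]

lemma OS.orderOf_r_prime {i : ZMod p} (hi : i ≠ 0) : orderOf (DihedralGroup.r i) = p := by
  haveI : NeZero p := ⟨(Fact.out : p.Prime).ne_zero⟩
  rw [DihedralGroup.orderOf_r]
  have hvp : i.val < p := ZMod.val_lt i
  have hv0 : i.val ≠ 0 := by simpa [ZMod.val_eq_zero] using hi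
  have : Nat.gcd p i.val = 1 :=
    Nat.coprime_of_lt_prime hv0 hvp Fact.out
  simp [this]

lemma OS.orderMultiset_Dp :
    orderMultiset (DihedralGroup p)
      = (1 ::ₘ Multiset.replicate (p - 1) p) + Multiset.replicate p 2 := by
  haveI : NeZero p := ⟨(Fact.out : p.Prime).ne_zero⟩
  unfold orderMultiset
  rw [OS.univ_val_map_equiv (OS.dihEquiv p)]
  rw [← Finset.univ_disjSum_univ, Finset.val_disjSum, Multiset.disjSum, Multiset.map_add,
    Multiset.map_map, Multiset.map_map]
  congr 1
  · have h1 : ∀ i : ZMod p,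
        (((fun g => orderOf g) ∘ (OS.dihEquiv p)) ∘ Sum.inl) i = if i = 0 then 1 else p := by
      intro i
      show orderOf (DihedralGroup.r i) = _
      split_ifs with h
      · simp [h, ← DihedralGroup.one_def]
      · exact OS.orderOf_r_prime h
    rw [Multiset.map_congr rfl (fun i _ => h1 i), OS.map_ite_point, ZMod.card]
  · have h2 : ∀ i : ZMod p,
        (((fun g => orderOf g) ∘ (OS.dihEquiv p)) ∘ Sum.inr) i = 2 := fun i =>
      DihedralGroup.orderOf_sr i
    rw [Multiset.map_congr rfl (fun i _ => h2 i), Multiset.map_const']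
    congr 1
    simp [ZMod.card]

-- target sorted lists
def OS.LG (p : ℕ) : List ℕ :=
  [1] ++ List.replicate 3 2 ++ List.replicate 8 3 ++ List.replicate (p-1) p
    ++ List.replicate (3*(p-1)) (2*p) ++ List.replicate (8*(p-1)) (3*p)

def OS.LH (p : ℕ) : List ℕ :=
  [1] ++ List.replicate (4*p+3) 2 ++ List.replicate 2 3 ++ List.replicate (2*p) 6
    ++ List.replicate (p-1) p ++ List.replicate (3*(p-1)) (2*p)
    ++ List.replicate (2*(p-1)) (3*p)

lemma OS.lcm_p2 (hp11 : 11 ≤ p) : Nat.lcm p 2 = 2 * p := by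
  have : Nat.Coprime p 2 :=
    (Nat.coprime_primes Fact.out (by norm_num)).mpr (by omega)
  rw [Nat.Coprime.lcm_eq_mul this, mul_comm]

lemma OS.lcm_p3 (hp11 : 11 ≤ p) : Nat.lcm p 3 = 3 * p := by
  have : Nat.Coprime p 3 :=
    (Nat.coprime_primes Fact.out (by norm_num)).mpr (by omega)
  rw [Nat.Coprime.lcm_eq_mul this, mul_comm]

lemma OS.mG_eq (hp11 : 11 ≤ p) :
    orderMultiset (Multiplicative (ZMod p) × alternatingGroup (Fin 4)) = (OS.LG p : Multiset ℕ) := by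
  rw [OS.orderMultiset_prod, OS.orderMultiset_Cp, OS.orderMultiset_A4]
  rw [Multiset.cons_bind, OS.bind_replicate]
  rw [Multiset.map_add, Multiset.map_add, Multiset.map_add, Multiset.map_add]
  rw [Multiset.map_replicate, Multiset.map_replicate, Multiset.map_replicate,
    Multiset.map_replicate, Multiset.map_singleton, Multiset.map_singleton]
  rw [OS.lcm_p2 hp11, OS.lcm_p3 hp11, Nat.lcm_one_left, Nat.lcm_one_left,
    Nat.lcm_one_left, Nat.lcm_one_right]
  unfold OS.LG
  refine Multiset.ext.mpr fun a => ?_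
  simp only [Multiset.count_add, Multiset.count_nsmul, Multiset.count_replicate,
    Multiset.count_singleton, Multiset.coe_count, List.count_append, List.count_replicate,
    List.count_singleton, beq_iff_eq, List.count_cons, List.count_nil]
  split_ifs <;> omega

set_option maxHeartbeats 1000000 in
lemma OS.mH_eq (hp11 : 11 ≤ p) :
    orderMultiset (Equiv.Perm (Fin 3) × DihedralGroup p) = (OS.LH p : Multiset ℕ) := by
  have h2p : Nat.lcm 2 p = 2*p := by rw [Nat.lcm_comm]; exact OS.lcm_p2 hp11
  have h3p : Nat.lcm 3 p = 3*p := by rw [Nat.lcm_comm]; exact OS.lcm_p3 hp11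
  have h21 : Nat.lcm 2 1 = 2 := by decide
  have h31 : Nat.lcm 3 1 = 3 := by decide
  have h22 : Nat.lcm 2 2 = 2 := by decide
  have h32 : Nat.lcm 3 2 = 6 := by decide
  rw [OS.orderMultiset_prod, OS.orderMultiset_S3, OS.orderMultiset_Dp]
  rw [Multiset.add_bind, Multiset.add_bind, Multiset.singleton_bind, OS.bind_replicate,
    OS.bind_replicate]
  simp only [Multiset.map_add, Multiset.map_cons, Multiset.map_replicate,
    Nat.lcm_one_left, h2p, h3p, h21, h31, h22, h32]
  unfold OS.LH
  refine Multiset.ext.mpr fun a => ?_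
  simp only [Multiset.count_add, Multiset.count_nsmul, Multiset.count_replicate,
    Multiset.count_singleton, Multiset.coe_count, List.count_append, List.count_replicate,
    List.count_singleton, beq_iff_eq, List.count_cons, List.count_nil, Multiset.count_cons]
  split_ifs <;> omega

lemma OS.LG_sorted (hp11 : 11 ≤ p) : List.Pairwise (· ≤ ·) (OS.LG p) := by
  unfold OS.LG
  simp only [List.pairwise_append, List.mem_replicate, List.mem_singleton,
    List.mem_append, List.pairwise_replicate, List.pairwise_singleton]
  repeat' apply And.intro
  all_goals first | (intro x hx y hy; omega) | omega | simp

lemma OS.LH_sorted (hp11 : 11 ≤ p) : List.Pairwise (· ≤ ·) (OS.LH p) := by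
  unfold OS.LH
  simp only [List.pairwise_append, List.mem_replicate, List.mem_singleton,
    List.mem_append, List.pairwise_replicate, List.pairwise_singleton]
  repeat' apply And.intro
  all_goals first | (intro x hx y hy; omega) | omega | simp

lemma OS.seq_eq_of_multiset {G : Type*} [Group G] [Fintype G] {L : List ℕ}
    (h : orderMultiset G = (L : Multiset ℕ)) (hL : List.Pairwise (· ≤ ·) L) :
    orderSequence G = L := by
  have h1 : orderSequence G = Multiset.sort (orderMultiset G) (· ≤ ·) := rfl
  rw [h1, h]
  refine List.Perm.eq_of_pairwise' (Multiset.pairwise_sort _ _) hL ?_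
  exact Multiset.coe_eq_coe.mp (Multiset.sort_eq _ _)

lemma OS.forall₂_replicate {r : ℕ → ℕ → Prop} {x y : ℕ} (h : r x y) (n : ℕ) :
    List.Forall₂ r (List.replicate n x) (List.replicate n y) := by
  induction n with
  | zero => simp
  | succ k ih => simpa [List.replicate_succ] using List.Forall₂.cons h ih

set_option maxRecDepth 10000 in
lemma OS.LG_decomp (hp11 : 11 ≤ p) : OS.LG p =
    [1] ++ (List.replicate 3 2 ++ (List.replicate 8 3 ++ (List.replicate (p-1) p ++
    (List.replicate (3*p-7) (2*p) ++ (List.replicate 2 (2*p) ++ (List.replicate 2 (2*p) ++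
    (List.replicate (2*p-2) (3*p) ++ (List.replicate (p-1) (3*p) ++
    (List.replicate (3*p-3) (3*p) ++ List.replicate (2*p-2) (3*p)))))))))) := by
  unfold OS.LG
  rw [show 3*(p-1) = (3*p-7)+2+2 by omega,
      show 8*(p-1) = (2*p-2)+(p-1)+(3*p-3)+(2*p-2) by omega]
  rw [List.replicate_add, List.replicate_add, List.replicate_add, List.replicate_add,
    List.replicate_add]
  simp only [List.append_assoc]

set_option maxRecDepth 10000 in
lemma OS.LH_decomp (hp11 : 11 ≤ p) : OS.LH p =
    [1] ++ (List.replicate 3 2 ++ (List.replicate 8 2 ++ (List.replicate (p-1) 2 ++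
    (List.replicate (3*p-7) 2 ++ (List.replicate 2 3 ++ (List.replicate 2 6 ++
    (List.replicate (2*p-2) 6 ++ (List.replicate (p-1) p ++
    (List.replicate (3*p-3) (2*p) ++ List.replicate (2*p-2) (3*p)))))))))) := by
  unfold OS.LH
  rw [show 4*p+3 = 3+8+(p-1)+(3*p-7) by omega,
      show 3*(p-1) = 3*p-3 by omega,
      show 2*(p-1) = 2*p-2 by omega,
      show List.replicate (2*p) 6 = List.replicate 2 6 ++ List.replicate (2*p-2) 6 from by
        rw [← List.replicate_add]; congr 1; omega]
  rw [List.replicate_add, List.replicate_add, List.replicate_add]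
  simp only [List.append_assoc]

lemma OS.dominates (hp11 : 11 ≤ p) : List.Forall₂ (· ≥ ·) (OS.LG p) (OS.LH p) := by
  rw [OS.LG_decomp hp11, OS.LH_decomp hp11]
  refine List.rel_append (List.Forall₂.cons (by omega) List.Forall₂.nil) ?_
  refine List.rel_append (OS.forall₂_replicate (by omega) _) ?_
  refine List.rel_append (OS.forall₂_replicate (by omega) _) ?_
  refine List.rel_append (OS.forall₂_replicate (by omega) _) ?_
  refine List.rel_append (OS.forall₂_replicate (by omega) _) ?_
  refine List.rel_append (OS.forall₂_replicate (by omega) _) ?_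
  refine List.rel_append (OS.forall₂_replicate (by omega) _) ?_
  refine List.rel_append (OS.forall₂_replicate (by omega) _) ?_
  refine List.rel_append (OS.forall₂_replicate (by omega) _) ?_
  refine List.rel_append (OS.forall₂_replicate (by omega) _) ?_
  exact OS.forall₂_replicate (by omega) _

lemma OS.ne (hp11 : 11 ≤ p) : OS.LG p ≠ OS.LH p := by
  intro h
  have := congrArg (List.count 3) h
  unfold OS.LG OS.LH at this
  simp only [List.count_append, List.count_replicate, List.count_singleton, beq_iff_eq,
    List.count_cons, List.count_nil] at this
  split_ifs at this <;> omega
end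


/-- For an odd prime `p ≥ 11` with `p ≡ 2 (mod 3)`, the order sequence of `C_p × A_4`
properly dominates the order sequence of `S_3 × D_{2p}`. -/
theorem properlyDominates_Cp_A4_S3_D2p {p : ℕ} [Fact p.Prime] (hodd : Odd p)
    (hp11 : 11 ≤ p) (hmod : p % 3 = 2) :
    ProperlyDominates
      (orderSequence (Multiplicative (ZMod p) × alternatingGroup (Fin 4)))
      (orderSequence (Equiv.Perm (Fin 3) × DihedralGroup p)) := by
  have hG := OS.seq_eq_of_multiset (OS.mG_eq hp11) (OS.LG_sorted hp11)
  have hH := OS.seq_eq_of_multiset (OS.mH_eq hp11) (OS.LH_sorted hp11)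
  rw [hG, hH]
  exact ⟨OS.dominates hp11, OS.ne hp11⟩
end

section
/- Every non-supersolvable group of order 132 is isomorphic to C_11 × A_4, the direct product of the cyclic group of order 11 with the alternating group on 4 letters. -/
open Subgroup MulAction Equiv Equiv.Perm

universe u

section Supersolvable

lemma bot_normal' {G : Type*} [Group G] : (⊥ : Subgroup G).Normal := by
  constructor; intro n h g; simp_all

lemma isCyclic_comap_quotient {G Q : Type*} [Group G] [Group Q] (f : G →* Q)
    (hf : Function.Surjective f) (A B : Subgroup Q) (hB : B.Normal)
    (hc : letI := hB.subgroupOf A; IsCyclic (A ⧸ B.subgroupOf A)) :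
    letI := (hB.comap f).subgroupOf (A.comap f)
    IsCyclic ((A.comap f) ⧸ (B.comap f).subgroupOf (A.comap f)) := by
  letI := hB.subgroupOf A
  letI := (hB.comap f).subgroupOf (A.comap f)
  let g : ↥(A.comap f) →* ↥A :=
    MonoidHom.codRestrict ((f.comp (A.comap f).subtype)) A (fun x => x.2)
  have hgsurj : Function.Surjective g := by
    rintro ⟨a, ha⟩
    obtain ⟨x, rfl⟩ := hf a
    exact ⟨⟨x, ha⟩, rfl⟩
  let φ : ↥(A.comap f) →* (A ⧸ B.subgroupOf A) :=
    (QuotientGroup.mk' (B.subgroupOf A)).comp g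
  have hφsurj : Function.Surjective φ :=
    (QuotientGroup.mk'_surjective _).comp hgsurj
  have hker : φ.ker = (B.comap f).subgroupOf (A.comap f) := by
    ext x
    simp only [φ, MonoidHom.mem_ker, MonoidHom.comp_apply, QuotientGroup.mk'_apply,
      QuotientGroup.eq_one_iff, mem_subgroupOf, mem_comap]
    rfl
  have e := QuotientGroup.quotientKerEquivOfSurjective φ hφsurj
  have e2 := (QuotientGroup.quotientMulEquivOfEq hker.symm).trans e
  exact isCyclic_of_surjective e2.symm e2.symm.surjective

lemma ss_trivial (G : Type*) [Group G] [Subsingleton G] : IsSupersolvable G := by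
  refine ⟨0, fun _ => ⊥, fun i => i.elim0, fun _ => bot_normal', rfl, ?_, fun i => i.elim0⟩
  exact Subsingleton.elim _ _

lemma ss_of_quotient {G : Type*} [Group G] (N : Subgroup G) (hN : N.Normal)
    (hNc : IsCyclic ↥N) (h : IsSupersolvable (G ⧸ N)) : IsSupersolvable G := by
  letI := hN
  obtain ⟨k, H', hmono, hnorm, h0, hlast, hcyc⟩ := h
  refine ⟨k + 1, Fin.cases ⊥ (fun j => (H' j).comap (QuotientGroup.mk' N)), ?_, ?_, ?_, ?_, ?_⟩
  · intro i
    induction i using Fin.cases with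
    | zero => simp
    | succ j =>
      rw [← Fin.succ_castSucc]
      simp only [Fin.cases_succ]
      exact Subgroup.comap_mono (hmono j)
  · intro i
    induction i using Fin.cases with
    | zero => simpa using bot_normal'
    | succ j => simpa using (hnorm j).comap _
  · simp
  · show (H' (Fin.last k)).comap (QuotientGroup.mk' N) = ⊤
    rw [hlast]; exact Subgroup.comap_top _
  · intro i
    induction i using Fin.cases with
    | zero =>
      simp only [Fin.castSucc_zero, Fin.cases_zero, Fin.cases_succ]
      set X : Subgroup G := (H' 0).comap (QuotientGroup.mk' N) with hX
      have hker : X = N := by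
        rw [hX, h0, MonoidHom.comap_bot, QuotientGroup.ker_mk']
      letI : ((⊥ : Subgroup G).subgroupOf X).Normal := bot_normal'.subgroupOf X
      have e0 : (X ⧸ (⊥ : Subgroup G).subgroupOf X) ≃* (X ⧸ (⊥ : Subgroup ↥X)) :=
        QuotientGroup.quotientMulEquivOfEq (Subgroup.bot_subgroupOf X)
      have e1 := QuotientGroup.quotientBot (G := ↥X)
      have e2 := MulEquiv.subgroupCongr hker
      have comp := (e2.symm.trans e1.symm).trans e0.symm
      have hcyc0 := isCyclic_of_surjective comp.toMonoidHom comp.surjective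
      exact hcyc0
    | succ j =>
      exact isCyclic_comap_quotient _ (QuotientGroup.mk'_surjective N) (H' j.succ)
        (H' j.castSucc) (hnorm j.castSucc) (hcyc j)

lemma ss_mulEquiv {G G' : Type*} [Group G] [Group G'] (e : G ≃* G')
    (h : IsSupersolvable G) : IsSupersolvable G' := by
  obtain ⟨k, H, hmono, hnorm, h0, hlast, hcyc⟩ := h
  let f : G' →* G := e.symm.toMonoidHom
  have hf : Function.Surjective f := e.symm.surjective
  refine ⟨k, fun i => (H i).comap f, fun i => Subgroup.comap_mono (hmono i),
    fun i => (hnorm i).comap f, ?_, ?_, ?_⟩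
  · show (H 0).comap f = ⊥
    rw [h0, MonoidHom.comap_bot]
    exact (MonoidHom.ker_eq_bot_iff f).mpr e.symm.injective
  · show (H (Fin.last k)).comap f = ⊤
    rw [hlast]; exact Subgroup.comap_top f
  · intro i
    exact isCyclic_comap_quotient f hf _ _ (hnorm i.castSucc) (hcyc i)

lemma ss_of_comm : ∀ (n : ℕ) (G : Type u) [CommGroup G] [Finite G], Nat.card G = n →
    IsSupersolvable G := by
  intro n
  induction n using Nat.strong_induction_on with
  | _ n ih =>
    intro G _ _ hn
    rcases subsingleton_or_nontrivial G with hs | hs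
    · exact ss_trivial G
    · obtain ⟨g, hg⟩ := exists_ne (1 : G)
      let N : Subgroup G := Subgroup.zpowers g
      have hNc : IsCyclic ↥N := by
        refine ⟨⟨⟨g, Subgroup.mem_zpowers g⟩, ?_⟩⟩
        rintro ⟨x, hx⟩
        obtain ⟨n, rfl⟩ := Subgroup.mem_zpowers_iff.mp hx
        exact ⟨n, Subtype.ext (by push_cast; rfl)⟩
      refine ss_of_quotient N (Subgroup.normal_of_comm N) hNc ?_
      have hcard := Subgroup.card_eq_card_quotient_mul_card_subgroup N
      have hN1 : Nat.card N ≠ 1 := by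
        intro h1
        rw [Subgroup.card_eq_one] at h1
        have hm := Subgroup.mem_zpowers g
        rw [show Subgroup.zpowers g = ⊥ from h1] at hm
        exact hg (Subgroup.mem_bot.mp hm)
      have hNpos : 0 < Nat.card N := Nat.card_pos
      have hq : Nat.card (G ⧸ N) < n := by
        subst hn
        have hpos : 0 < Nat.card (G ⧸ N) := Nat.card_pos
        have h2 : 2 ≤ Nat.card ↥N := by omega
        nlinarith [hcard]
      exact ih _ hq (G ⧸ N) rfl

end Supersolvable

section SylowFacts

/-- In a finite group whose order is divisible by `p` but not `p ^ 2`,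
every Sylow `p`-subgroup has order exactly `p`. -/
lemma sylow_card_prime {p : ℕ} [Fact p.Prime] {G : Type*} [Group G] [Finite G]
    (hdvd : p ∣ Nat.card G) (hsq : ¬ p ^ 2 ∣ Nat.card G) (P : Sylow p G) :
    Nat.card (P : Subgroup G) = p := by
  obtain ⟨n, hn⟩ := IsPGroup.iff_card.mp P.isPGroup'
  have hpdvd : (p : ℕ) ^ n ∣ Nat.card G := by
    rw [← hn]; exact Subgroup.card_subgroup_dvd_card _
  have hp1 := (Fact.out : p.Prime).one_lt
  have hn2 : n < 2 := by
    by_contra h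
    exact hsq (dvd_trans (pow_dvd_pow p (by omega : 2 ≤ n)) hpdvd)
  have hn0 : n ≠ 0 := by
    intro h
    subst h
    have hidx : (P : Subgroup G).index = Nat.card G := by
      have := Subgroup.card_mul_index (P : Subgroup G)
      rw [hn] at this; simpa using this
    exact P.not_dvd_index (hidx ▸ hdvd)
  interval_cases n
  · omega
  · simpa using hn

lemma sylow11_normal {G : Type*} [Group G] [Finite G] (hG : Nat.card G = 132)
    (P : Sylow 11 G) : (P : Subgroup G).Normal := by
  haveI : Fact (Nat.Prime 11) := ⟨by norm_num⟩
  have hPcard : Nat.card (P : Subgroup G) = 11 :=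
    sylow_card_prime (by rw [hG]; norm_num) (by rw [hG]; norm_num) P
  have hPindex : (P : Subgroup G).index = 12 := by
    have := Subgroup.card_mul_index (P : Subgroup G)
    rw [hPcard, hG] at this; omega
  have hdvd12 : Nat.card (Sylow 11 G) ∣ 12 := hPindex ▸ Sylow.card_dvd_index P
  have hmod : Nat.card (Sylow 11 G) % 11 = 1 % 11 := card_sylow_modEq_one 11 G
  have hle : Nat.card (Sylow 11 G) ≤ 12 := Nat.le_of_dvd (by norm_num) hdvd12
  have h1or12 : Nat.card (Sylow 11 G) = 1 ∨ Nat.card (Sylow 11 G) = 12 := by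
    interval_cases h : Nat.card (Sylow 11 G) <;> revert hdvd12 hmod <;> decide
  have h12F : Nat.card (Sylow 11 G) = 12 → False := by
    intro h12
    have hNeq : (P : Subgroup G) = (Subgroup.normalizer (P : Set G)) := by
      have hidx : (Subgroup.normalizer (P : Set G)).index = 12 := by
        rw [← Sylow.card_eq_index_normalizer P]; exact h12
      have hcard : Nat.card (Subgroup.normalizer (P : Set G)) = 11 := by
        have := Subgroup.card_mul_index (Subgroup.normalizer (P : Set G))
        rw [hidx, hG] at this; omega
      exact Subgroup.eq_of_le_of_card_ge Subgroup.le_normalizer (by rw [hPcard, hcard])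
    haveI : IsCyclic ↥(P : Subgroup G) := isCyclic_of_prime_card hPcard
    haveI hcommP : IsMulCommutative ↥(P : Subgroup G) := by
      letI := IsCyclic.commGroup (α := ↥(P : Subgroup G))
      exact ⟨⟨mul_comm⟩⟩
    have hle2 : (Subgroup.normalizer (P : Set G)) ≤ Subgroup.centralizer (P : Set G) := by
      rw [← hNeq]
      exact Subgroup.le_centralizer _
    set K := (MonoidHom.transferSylow P hle2).ker with hK
    have hKP : Subgroup.IsComplement' K P :=
      MonoidHom.ker_transferSylow_isComplement' P hle2
    have hKcard : Nat.card K = 12 := by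
      have := hKP.card_mul
      rw [hPcard, hG] at this; omega
    haveI : K.Normal := MonoidHom.normal_ker _
    let act : ↥(P : Subgroup G) →* MulAut ↥K :=
      (MulAut.conjNormal).comp (P : Subgroup G).subtype
    letI : MulAction ↥(P : Subgroup G) ↥K := MulAction.compHom _ act
    have hsmul : ∀ (p : ↥(P : Subgroup G)) (k : ↥K), ((p • k : ↥K) : G) = p * k * (p : G)⁻¹ :=
      fun p k => rfl
    have hfix : Nat.card ↥K ≡ Nat.card (fixedPoints ↥(P : Subgroup G) ↥K) [MOD 11] :=
      (P.isPGroup').card_modEq_card_fixedPoints ↥K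
    have hfle : Nat.card (fixedPoints ↥(P : Subgroup G) ↥K) ≤ 12 := by
      rw [← hKcard]
      exact Nat.card_le_card_of_injective Subtype.val Subtype.val_injective
    rw [hKcard] at hfix
    have hf1or12 : Nat.card (fixedPoints ↥(P : Subgroup G) ↥K) = 1 ∨
        Nat.card (fixedPoints ↥(P : Subgroup G) ↥K) = 12 := by
      have := hfix
      unfold Nat.ModEq at this
      omega
    rcases hf1or12 with hf1 | hf12
    · have hone : ∀ x ∈ fixedPoints ↥(P : Subgroup G) ↥K, x = (1 : ↥K) := by
        obtain ⟨z, hz⟩ := Nat.card_eq_one_iff_exists.mp hf1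
        have h1f : (⟨(1 : ↥K), fun p => by show act p 1 = 1; exact map_one _⟩ :
            fixedPoints ↥(P : Subgroup G) ↥K) = z := hz _
        intro x hx
        have := hz ⟨x, hx⟩
        rw [← h1f] at this
        exact Subtype.ext_iff.mp this
      obtain ⟨x, hx⟩ := exists_prime_orderOf_dvd_card' (G := ↥K) 2 (by rw [hKcard]; norm_num)
      obtain ⟨y, hy⟩ := exists_prime_orderOf_dvd_card' (G := ↥K) 3 (by rw [hKcard]; norm_num)
      have horb : ∀ z : ↥K, orderOf z ≠ 1 → (orbit ↥(P : Subgroup G) z).ncard = 11 := by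
        intro z hz
        have hcardorb : Nat.card (orbit ↥(P : Subgroup G) z) ∣ 11 := by
          have h1 : Nat.card (orbit ↥(P : Subgroup G) z) =
              (stabilizer ↥(P : Subgroup G) z).index :=
            Nat.card_congr (orbitEquivQuotientStabilizer ↥(P : Subgroup G) z)
          have h2 := Subgroup.index_dvd_card (H := stabilizer ↥(P : Subgroup G) z)
          rw [hPcard] at h2
          rw [h1]; exact h2
        rcases (Nat.Prime.eq_one_or_self_of_dvd (by norm_num) _ hcardorb) with h1 | h11
        · exfalso
          obtain ⟨w, hw⟩ := Nat.card_eq_one_iff_exists.mp h1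
          have hzfix : z ∈ fixedPoints ↥(P : Subgroup G) ↥K := by
            intro p
            have h1 := hw ⟨p • z, mem_orbit z p⟩
            have h2 := hw ⟨z, mem_orbit_self z⟩
            rw [← h2] at h1
            exact Subtype.ext_iff.mp h1
          exact hz (by rw [hone z hzfix]; simp)
        · rw [← Nat.card_coe_set_eq]; exact h11
      have hordorb : ∀ (z : ↥K) (w : ↥K), w ∈ orbit ↥(P : Subgroup G) z →
          orderOf w = orderOf z := by
        rintro z w ⟨p, rfl⟩
        exact orderOf_injective (act p).toMonoidHom (act p).injective z
      have hdisj : Disjoint (orbit ↥(P : Subgroup G) x) (orbit ↥(P : Subgroup G) y) := by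
        rw [Set.disjoint_left]
        intro w hwx hwy
        have := (hordorb x w hwx).symm.trans (hordorb y w hwy)
        rw [hx, hy] at this; omega
      have hunion := Set.ncard_union_eq hdisj (Set.toFinite _) (Set.toFinite _)
      rw [horb x (by omega), horb y (by omega)] at hunion
      have hsub : (orbit ↥(P : Subgroup G) x ∪ orbit ↥(P : Subgroup G) y).ncard ≤
          Nat.card ↥K := by
        rw [← Set.ncard_univ]
        exact Set.ncard_le_ncard (Set.subset_univ _) (Set.toFinite _)
      rw [hKcard] at hsub
      omega
    · have hall : ∀ (k : ↥K) (p : ↥(P : Subgroup G)), (p : G) * k * (p : G)⁻¹ = k := by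
        have huniv : fixedPoints ↥(P : Subgroup G) ↥K = Set.univ := by
          apply Set.eq_of_subset_of_ncard_le (Set.subset_univ _)
          rw [Set.ncard_univ, ← Nat.card_coe_set_eq, hf12, hKcard]
        intro k p
        have hk : k ∈ fixedPoints ↥(P : Subgroup G) ↥K := by rw [huniv]; trivial
        have := hk p
        calc (p : G) * k * (p : G)⁻¹ = ((p • k : ↥K) : G) := (hsmul p k).symm
          _ = k := by rw [this]
      have hPnormal : (P : Subgroup G).Normal := by
        constructor
        intro n hn g
        obtain ⟨⟨⟨k, hk⟩, ⟨p, hp⟩⟩, hg, -⟩ := hKP.existsUnique g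
        have hm : p * n * p⁻¹ ∈ (P : Subgroup G) :=
          Subgroup.mul_mem _ (Subgroup.mul_mem _ hp hn) (Subgroup.inv_mem _ hp)
        have h0 := hall ⟨k, hk⟩ ⟨p * n * p⁻¹, hm⟩
        simp only [Subgroup.coe_mk] at h0
        have hc : (p * n * p⁻¹) * k = k * (p * n * p⁻¹) := by
          rw [mul_inv_eq_iff_eq_mul] at h0
          exact h0
        have hgnp : g * n * g⁻¹ = p * n * p⁻¹ := by
          rw [← hg]
          show (k * p) * n * (k * p)⁻¹ = p * n * p⁻¹
          calc (k * p) * n * (k * p)⁻¹ = k * (p * n * p⁻¹) * k⁻¹ := by group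
            _ = p * n * p⁻¹ := by rw [← hc]; group
        rw [hgnp]
        exact hm
      have htop : (Subgroup.normalizer (P : Set G)) = ⊤ := Subgroup.normalizer_eq_top_iff.mpr hPnormal
      have h' := Sylow.card_eq_index_normalizer P
      rw [htop, Subgroup.index_top, h12] at h'
      omega
  rcases h1or12 with h1 | h12
  · have hidx1 : (Subgroup.normalizer (P : Set G)).index = 1 := by
      rw [← Sylow.card_eq_index_normalizer P, h1]
    exact Subgroup.normalizer_eq_top_iff.mp (Subgroup.index_eq_one.mp hidx1)
  · exact absurd h12 (fun h => h12F h)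

lemma a4_of_four_sylow {H : Type*} [Group H] [Finite H] (hH : Nat.card H = 12)
    (h4 : Nat.card (Sylow 3 H) = 4) : Nonempty (H ≃* alternatingGroup (Fin 4)) := by
  haveI : Fact (Nat.Prime 3) := ⟨by norm_num⟩
  have hQcard : ∀ Q : Sylow 3 H, Nat.card (Q : Subgroup H) = 3 := fun Q =>
    sylow_card_prime (by rw [hH]; norm_num) (by rw [hH]; norm_num) Q
  have hQnorm : ∀ Q : Sylow 3 H, (Subgroup.normalizer (Q : Set H)) = Q := by
    intro Q
    have hidx : (Subgroup.normalizer (Q : Set H)).index = 4 := by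
      rw [← Sylow.card_eq_index_normalizer Q]; exact h4
    have hcard : Nat.card (Subgroup.normalizer (Q : Set H)) = 3 := by
      have := Subgroup.card_mul_index (Subgroup.normalizer (Q : Set H))
      rw [hidx, hH] at this; omega
    exact (Subgroup.eq_of_le_of_card_ge Subgroup.le_normalizer
      (by rw [hQcard Q]; exact hcard.le)).symm
  let ρ := MulAction.toPermHom H (Sylow 3 H)
  have hinj : Function.Injective ρ := by
    rw [← MonoidHom.ker_eq_bot_iff]
    rw [eq_bot_iff]
    intro g hg
    have hgQ : ∀ Q : Sylow 3 H, g ∈ (Q : Subgroup H) := by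
      intro Q
      have : ρ g Q = Q := by
        rw [MonoidHom.mem_ker] at hg
        rw [hg]; rfl
      have hsm : g • Q = Q := this
      rw [← hQnorm Q]
      exact Sylow.smul_eq_iff_mem_normalizer.mp hsm
    haveI : Nontrivial (Sylow 3 H) := by
      rw [← Finite.one_lt_card_iff_nontrivial]
      omega
    obtain ⟨Q1, Q2, hQQ⟩ := exists_pair_ne (Sylow 3 H)
    have hginf : g ∈ (Q1 : Subgroup H) ⊓ (Q2 : Subgroup H) := ⟨hgQ Q1, hgQ Q2⟩
    have hinf : (Q1 : Subgroup H) ⊓ (Q2 : Subgroup H) = ⊥ := by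
      have hdvd : Nat.card ((Q1 : Subgroup H) ⊓ (Q2 : Subgroup H) : Subgroup H) ∣ 3 := by
        have h := Subgroup.card_dvd_of_le (inf_le_left (a := (Q1 : Subgroup H))
          (b := (Q2 : Subgroup H)))
        rw [hQcard Q1] at h
        exact h
      rcases (Nat.Prime.eq_one_or_self_of_dvd (by norm_num) _ hdvd) with h1 | h3
      · exact Subgroup.card_eq_one.mp h1
      · exfalso
        have heq : (Q1 : Subgroup H) ⊓ (Q2 : Subgroup H) = Q1 :=
          Subgroup.eq_of_le_of_card_ge inf_le_left (by rw [hQcard Q1, h3])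
        have hle : (Q1 : Subgroup H) ≤ Q2 := heq ▸ inf_le_right
        have : (Q1 : Subgroup H) = Q2 :=
          Subgroup.eq_of_le_of_card_ge hle (by rw [hQcard Q1, hQcard Q2])
        exact hQQ (Sylow.ext this)
    rw [hinf] at hginf
    exact hginf
  haveI : Fintype (Sylow 3 H) := Fintype.ofFinite _
  have e4 : Sylow 3 H ≃ Fin 4 := by
    apply Fintype.equivFinOfCardEq
    rw [← Nat.card_eq_fintype_card]; exact h4
  let permIso : Equiv.Perm (Sylow 3 H) ≃* Equiv.Perm (Fin 4) :=
    { toEquiv := Equiv.permCongr e4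
      map_mul' := by
        intro p q
        ext x
        simp [Equiv.permCongr_apply, Equiv.Perm.mul_apply] }
  let ψ : H →* Equiv.Perm (Fin 4) := permIso.toMonoidHom.comp ρ
  have hψinj : Function.Injective ψ := permIso.injective.comp hinj
  set T := ψ.range with hT
  have hTcard : Nat.card T = 12 := by
    rw [← hH]
    exact (Nat.card_congr (MonoidHom.ofInjective hψinj).toEquiv).symm
  have hS4card : Nat.card (Equiv.Perm (Fin 4)) = 24 := by
    rw [Nat.card_eq_fintype_card]
    simp [Fintype.card_perm]
    decide
  have hidx2 : T.index = 2 := by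
    have := Subgroup.card_mul_index T
    rw [hTcard, hS4card] at this; omega
  have hA4le : alternatingGroup (Fin 4) ≤ T := by
    rw [← Equiv.Perm.closure_three_cycles_eq_alternating]
    apply (Subgroup.closure_le _).mpr
    intro σ hσ
    have ho : orderOf σ = 3 := (hσ : Equiv.Perm.IsThreeCycle σ).orderOf
    have hσ4 : (σ ^ 2) ^ 2 = σ := by
      rw [← pow_mul]
      have h3 : σ ^ 3 = 1 := by rw [← ho]; exact pow_orderOf_eq_one σ
      calc σ ^ (2*2) = σ ^ 3 * σ := by group
        _ = σ := by rw [h3, one_mul]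
    have := Subgroup.sq_mem_of_index_two hidx2 (σ ^ 2)
    rw [hσ4] at this
    exact this
  have hcardA4 : Nat.card (alternatingGroup (Fin 4)) = 12 := by
    have := two_mul_card_alternatingGroup (α := Fin 4)
    rw [Nat.card_eq_fintype_card]
    rw [Nat.card_eq_fintype_card] at hS4card
    omega
  have hTA : alternatingGroup (Fin 4) = T :=
    Subgroup.eq_of_le_of_card_ge hA4le (by rw [hTcard, hcardA4])
  exact ⟨(MonoidHom.ofInjective hψinj).trans (MulEquiv.subgroupCongr hTA.symm)⟩

end SylowFacts

/-- Every non-supersolvable group of order 132 is isomorphic to `C_11 × A_4`. -/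
theorem nonSupersolvable_of_order_132 (G : Type*) [Group G] [Fintype G]
    (hG : Fintype.card G = 132) (hns : ¬ IsSupersolvable G) :
    Nonempty (G ≃* Multiplicative (ZMod 11) × alternatingGroup (Fin 4)) := by
  haveI : Fact (Nat.Prime 11) := ⟨by norm_num⟩
  haveI : Fact (Nat.Prime 3) := ⟨by norm_num⟩
  have hG' : Nat.card G = 132 := by rw [Nat.card_eq_fintype_card, hG]
  obtain ⟨P⟩ : Nonempty (Sylow 11 G) := Sylow.nonempty
  haveI hPnorm : (P : Subgroup G).Normal := sylow11_normal hG' P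
  have hPcard : Nat.card (P : Subgroup G) = 11 :=
    sylow_card_prime (by rw [hG']; norm_num) (by rw [hG']; norm_num) P
  haveI hPcyc : IsCyclic ↥(P : Subgroup G) := isCyclic_of_prime_card hPcard
  have hPindex : (P : Subgroup G).index = 12 := by
    have := Subgroup.card_mul_index (P : Subgroup G); rw [hPcard, hG'] at this; omega
  obtain ⟨Hc, hHc⟩ := Subgroup.exists_right_complement'_of_coprime
      (N := (P : Subgroup G)) (by rw [hPcard, hPindex]; norm_num)
  have hHcard : Nat.card Hc = 12 := by
    have := hHc.card_mul; rw [hPcard, hG'] at this; omega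
  -- `Hc` is isomorphic to `G ⧸ P`
  let f : ↥Hc →* G ⧸ (P : Subgroup G) := (QuotientGroup.mk' _).comp Hc.subtype
  have hfinj : Function.Injective f := by
    rw [← MonoidHom.ker_eq_bot_iff, eq_bot_iff]
    intro x hx
    rw [MonoidHom.mem_ker] at hx
    have hxP : (x : G) ∈ (P : Subgroup G) := (QuotientGroup.eq_one_iff _).mp hx
    have hdis := hHc.disjoint
    have hxb : (x : G) ∈ (⊥ : Subgroup G) := hdis.le_bot ⟨hxP, x.2⟩
    rw [Subgroup.mem_bot] at hxb
    exact Subgroup.mem_bot.mpr (Subtype.ext hxb)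
  have hfsurj : Function.Surjective f := by
    intro q
    obtain ⟨g, rfl⟩ := QuotientGroup.mk'_surjective _ q
    obtain ⟨⟨⟨a, ha⟩, ⟨b, hb⟩⟩, hab, -⟩ := hHc.existsUnique g
    refine ⟨⟨b, hb⟩, ?_⟩
    have hab' : a * b = g := hab
    rw [← hab']
    have ha1 : (QuotientGroup.mk' (P : Subgroup G)) a = 1 :=
      (QuotientGroup.eq_one_iff a).mpr ha
    have : (QuotientGroup.mk' (P : Subgroup G)) (a * b) =
        (QuotientGroup.mk' (P : Subgroup G)) b := by
      rw [map_mul, ha1, one_mul]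
    exact this.symm
  let qiso : ↥Hc ≃* G ⧸ (P : Subgroup G) := MulEquiv.ofBijective f ⟨hfinj, hfsurj⟩
  -- Sylow 3 subgroups of Hc
  obtain ⟨Q⟩ : Nonempty (Sylow 3 ↥Hc) := Sylow.nonempty
  have hQcard : Nat.card (Q : Subgroup ↥Hc) = 3 :=
    sylow_card_prime (by rw [hHcard]; norm_num) (by rw [hHcard]; norm_num) Q
  have hQidx : (Q : Subgroup ↥Hc).index = 4 := by
    have := Subgroup.card_mul_index (Q : Subgroup ↥Hc); rw [hQcard, hHcard] at this; omega
  have hn3dvd : Nat.card (Sylow 3 ↥Hc) ∣ 4 := hQidx ▸ Sylow.card_dvd_index Q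
  have hn3mod : Nat.card (Sylow 3 ↥Hc) % 3 = 1 % 3 := card_sylow_modEq_one 3 ↥Hc
  have hn3le : Nat.card (Sylow 3 ↥Hc) ≤ 4 := Nat.le_of_dvd (by norm_num) hn3dvd
  have h1or4 : Nat.card (Sylow 3 ↥Hc) = 1 ∨ Nat.card (Sylow 3 ↥Hc) = 4 := by
    interval_cases h : Nat.card (Sylow 3 ↥Hc) <;> revert hn3dvd hn3mod <;> decide
  rcases h1or4 with h1 | h4
  · -- Sylow 3 of Hc normal: Hc and hence G is supersolvable, contradiction
    exfalso
    have hQnormal : (Q : Subgroup ↥Hc).Normal := by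
      have hidx1 : (Subgroup.normalizer (Q : Set ↥Hc)).index = 1 := by
        rw [← Sylow.card_eq_index_normalizer Q, h1]
      exact Subgroup.normalizer_eq_top_iff.mp (Subgroup.index_eq_one.mp hidx1)
    haveI := hQnormal
    have hquotcard : Nat.card (↥Hc ⧸ (Q : Subgroup ↥Hc)) = 4 := by
      have := Subgroup.card_eq_card_quotient_mul_card_subgroup (Q : Subgroup ↥Hc)
      rw [hHcard, hQcard] at this; omega
    letI : CommGroup (↥Hc ⧸ (Q : Subgroup ↥Hc)) :=
      IsPGroup.commGroupOfCardEqPrimeSq (p := 2) (by rw [hquotcard]; norm_num)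
    have hssq : IsSupersolvable (↥Hc ⧸ (Q : Subgroup ↥Hc)) :=
      ss_of_comm (Nat.card (↥Hc ⧸ (Q : Subgroup ↥Hc))) _ rfl
    have hssHc : IsSupersolvable ↥Hc :=
      ss_of_quotient (Q : Subgroup ↥Hc) hQnormal (isCyclic_of_prime_card hQcard) hssq
    exact hns (ss_of_quotient (P : Subgroup G) hPnorm hPcyc (ss_mulEquiv qiso hssHc))
  · -- Hc ≅ A4 and the conjugation action of Hc on P is trivial
    obtain ⟨eA⟩ := a4_of_four_sylow hHcard h4
    let φ : ↥Hc →* MulAut ↥(P : Subgroup G) := MulAut.conjNormal.comp Hc.subtype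
    have hAut : Nat.card (MulAut ↥(P : Subgroup G)) = 10 := by
      rw [IsCyclic.card_mulAut, hPcard, Nat.totient_prime (by norm_num : Nat.Prime 11)]
    have h10 : Nat.card φ.range ∣ 10 := by
      rw [← hAut]; exact Subgroup.card_subgroup_dvd_card _
    have hqr : Nat.card (↥Hc ⧸ φ.ker) = Nat.card φ.range :=
      Nat.card_congr (QuotientGroup.quotientKerEquivRange φ).toEquiv
    have hkr : Nat.card φ.range * Nat.card φ.ker = 12 := by
      rw [← hqr, ← hHcard]
      exact (Subgroup.card_eq_card_quotient_mul_card_subgroup φ.ker).symm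
    have h12dvd : Nat.card φ.range ∣ 12 := ⟨Nat.card φ.ker, hkr.symm⟩
    have h2dvd : Nat.card φ.range ∣ 2 := by
      have hg2 := Nat.dvd_gcd h10 h12dvd
      have : Nat.gcd 10 12 = 2 := by decide
      rwa [this] at hg2
    have hr0 : Nat.card φ.range ≠ 0 := by
      intro h0
      rw [h0] at hkr
      simp at hkr
    have h1or2 : Nat.card φ.range = 1 ∨ Nat.card φ.range = 2 := by
      have := Nat.le_of_dvd (by norm_num) h2dvd
      omega
    have hrange1 : Nat.card φ.range = 1 := by
      rcases h1or2 with h | h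
      · exact h
      · exfalso
        have hker6 : Nat.card φ.ker = 6 := by rw [h] at hkr; omega
        set K2 := φ.ker.map eA.toMonoidHom with hK2
        have hK2card : Nat.card K2 = 6 := by
          rw [← hker6]
          exact (Nat.card_congr
            (Subgroup.equivMapOfInjective φ.ker eA.toMonoidHom eA.injective).toEquiv).symm
        have hA4card : Nat.card (alternatingGroup (Fin 4)) = 12 := by
          have h2m := two_mul_card_alternatingGroup (α := Fin 4)
          have h24 : Fintype.card (Equiv.Perm (Fin 4)) = 24 := by
            simp [Fintype.card_perm]; decide
          rw [Nat.card_eq_fintype_card]; omega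
        have hK2idx : K2.index = 2 := by
          have := Subgroup.card_mul_index K2
          rw [hK2card, hA4card] at this; omega
        set K3 := K2.map (alternatingGroup (Fin 4)).subtype with hK3
        have hK3card : Nat.card K3 = 6 := by
          rw [← hK2card]
          exact (Nat.card_congr (Subgroup.equivMapOfInjective _ _
            (Subgroup.subtype_injective _)).toEquiv).symm
        have hleK3 : alternatingGroup (Fin 4) ≤ K3 := by
          rw [← Equiv.Perm.closure_three_cycles_eq_alternating]
          apply (Subgroup.closure_le _).mpr
          intro σ hσ
          have hσ3 : Equiv.Perm.IsThreeCycle σ := hσ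
          have hσA : σ ∈ alternatingGroup (Fin 4) :=
            Equiv.Perm.mem_alternatingGroup.mpr hσ3.sign
          have ho : orderOf σ = 3 := hσ3.orderOf
          have h3 : σ ^ 3 = 1 := by rw [← ho]; exact pow_orderOf_eq_one σ
          set b : ↥(alternatingGroup (Fin 4)) := ⟨σ, hσA⟩ with hb
          have hmem : (b ^ 2) ^ 2 ∈ K2 := Subgroup.sq_mem_of_index_two hK2idx (b ^ 2)
          refine Subgroup.mem_map.mpr ⟨(b ^ 2) ^ 2, hmem, ?_⟩
          have hval : (((b ^ 2) ^ 2 : ↥(alternatingGroup (Fin 4))) : Equiv.Perm (Fin 4)) =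
              (σ ^ 2) ^ 2 := by
            push_cast [hb]
            rfl
          show (((b ^ 2) ^ 2 : ↥(alternatingGroup (Fin 4))) : Equiv.Perm (Fin 4)) = σ
          rw [hval, ← pow_mul]
          calc σ ^ (2 * 2) = σ ^ 3 * σ := by group
            _ = σ := by rw [h3, one_mul]
        have hcontr := Subgroup.card_le_of_le hleK3
        rw [hA4card, hK3card] at hcontr
        omega
    have hrb : φ.range = ⊥ := Subgroup.card_eq_one.mp hrange1
    have hcomm : ∀ (h : ↥Hc) (p : ↥(P : Subgroup G)),
        (h : G) * p * (h : G)⁻¹ = (p : G) := by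
      intro h p
      have hmem : φ h ∈ φ.range := ⟨h, rfl⟩
      rw [hrb, Subgroup.mem_bot] at hmem
      have hco := congrArg
        (fun ψ : MulAut ↥(P : Subgroup G) => ((ψ p : ↥(P : Subgroup G)) : G)) hmem
      simpa [φ] using hco
    have hbij : Function.Bijective
        (fun x : ↥(P : Subgroup G) × ↥Hc => ((x.1 : G) * (x.2 : G))) := hHc
    let μ : (↥(P : Subgroup G) × ↥Hc) ≃* G :=
      { Equiv.ofBijective _ hbij with
        map_mul' := by
          rintro ⟨p1, h1⟩ ⟨p2, h2⟩
          show ((p1 * p2 : ↥(P : Subgroup G)) : G) * ((h1 * h2 : ↥Hc) : G) =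
            ((p1 : G) * h1) * ((p2 : G) * h2)
          push_cast
          have hc := hcomm h1 p2
          rw [mul_inv_eq_iff_eq_mul] at hc
          calc (p1 : G) * p2 * ((h1 : G) * h2)
              = (p1 : G) * ((p2 : G) * (h1 : G)) * h2 := by group
            _ = (p1 : G) * ((h1 : G) * (p2 : G)) * h2 := by rw [← hc]
            _ = ((p1 : G) * h1) * ((p2 : G) * h2) := by group }
    let PZ : ↥(P : Subgroup G) ≃* Multiplicative (ZMod 11) :=
      mulEquivOfPrimeCardEq (p := 11) hPcard (by
        rw [show Nat.card (Multiplicative (ZMod 11)) = Nat.card (ZMod 11) from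
          Nat.card_congr Multiplicative.ofAdd.symm, Nat.card_zmod])
    exact ⟨μ.symm.trans (PZ.prodCongr eA)⟩
end
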